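/- With the setup of the starting system Q(λ,x) = ((λ-μ_1)(x_1^{m-1}-β_1), ..., (λ-μ_n)(x_n^{m-1}-β_n), c_1x_1+···+c_nx_n+d), let (λ*, x*) be a solution with λ* = μ_i, (x_j*)^{m-1} = β_j for all j ≠ i, and c·x* + d = 0. Assume μ_i ≠ μ_j for j ≠ i, β_j ≠ 0, c_i ≠ 0, x_i* ≠ 0, and (x_i*)^{m-1} ≠ β_i. Then the Jacobian matrix DQ(λ*, x*) of Q with respect to (λ, x_1,...,x_n) is nonsingular; in fact det DQ(λ*,x*) = (-1)^{i+1} A_i* (-1)^{n+i} c_i ∏_{j≠i} B_j* ≠ 0, where A_i* = (x_i*)^{m-1} - β_i and B_j* = (μ_i - μ_j)(m-1)(x_j*)^{m-2}. -/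

import Mathlib

open Finset

/-- The Jacobian of the starting system `Q(λ,x)` at a solution `(λ*, x*)` with
`λ* = μ_i` is nonsingular; its determinant is, up to sign,
`A_i* · c_i · ∏_{j≠i} B_j*` where `A_i* = (x_i*)^{m-1} - β_i` and
`B_j* = (μ_i - μ_j)(m-1)(x_j*)^{m-2}`. -/
theorem starting_system_jacobian_nonsingular {n m : ℕ} (hm : 3 ≤ m)
    (μ β c : Fin n → ℂ) (d : ℂ) (i : Fin n) (lam : ℂ) (x : Fin n → ℂ)
    (hlam : lam = μ i)
    (hroot : ∀ j, j ≠ i → x j ^ (m - 1) = β j)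
    (hhyp : ∑ j, c j * x j + d = 0)
    (hμ : ∀ j, j ≠ i → μ i ≠ μ j)
    (hβ : ∀ j, β j ≠ 0) (hci : c i ≠ 0)
    (hxi : x i ≠ 0) (hAi : x i ^ (m - 1) ≠ β i)
    (hxj : ∀ j, j ≠ i → x j ≠ 0) :
    -- the Jacobian matrix `DQ(λ*, x*)`, rows = equations, columns = (λ, x₁,…,xₙ)
    (Matrix.det (Matrix.of (fun r s : Unit ⊕ Fin n =>
      match r, s with
      | Sum.inr j, Sum.inl _ => x j ^ (m - 1) - β j
      | Sum.inr j, Sum.inr k =>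
          if k = j then (lam - μ j) * (m - 1) * x j ^ (m - 2) else 0
      | Sum.inl _, Sum.inl _ => 0
      | Sum.inl _, Sum.inr k => c k)) ≠ 0) ∧
    ∃ ε : ℂ, (ε = 1 ∨ ε = -1) ∧
      Matrix.det (Matrix.of (fun r s : Unit ⊕ Fin n =>
        match r, s with
        | Sum.inr j, Sum.inl _ => x j ^ (m - 1) - β j
        | Sum.inr j, Sum.inr k =>
            if k = j then (lam - μ j) * (m - 1) * x j ^ (m - 2) else 0
        | Sum.inl _, Sum.inl _ => 0
        | Sum.inl _, Sum.inr k => c k))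
      = ε * (x i ^ (m - 1) - β i) * c i *
          ∏ j ∈ Finset.univ.erase i, (μ i - μ j) * (m - 1) * x j ^ (m - 2) := by
  subst hlam
  set B : Fin n → ℂ := fun j => (μ i - μ j) * (m - 1) * x j ^ (m - 2) with hB
  set M : Matrix (Unit ⊕ Fin n) (Unit ⊕ Fin n) ℂ := Matrix.of (fun r s : Unit ⊕ Fin n =>
      match r, s with
      | Sum.inr j, Sum.inl _ => x j ^ (m - 1) - β j
      | Sum.inr j, Sum.inr k =>
          if k = j then (μ i - μ j) * (m - 1) * x j ^ (m - 2) else 0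
      | Sum.inl _, Sum.inl _ => 0
      | Sum.inl _, Sum.inr k => c k) with hM
  set σ : Equiv.Perm (Unit ⊕ Fin n) := Equiv.swap (Sum.inl ()) (Sum.inr i) with hσ
  set D : Matrix (Fin n) (Fin n) ℂ := (Matrix.diagonal B).updateRow i c with hD
  have hblock : M.submatrix σ id =
      Matrix.fromBlocks (Matrix.of fun _ _ : Unit => x i ^ (m - 1) - β i) 0 0 D := by
    ext r s
    cases r with
    | inl u =>
      have hσl : σ (Sum.inl u) = Sum.inr i := by
        cases u; exact Equiv.swap_apply_left _ _
      cases s with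
      | inl v => simp [Matrix.submatrix, hσl, hM]
      | inr k =>
        simp only [Matrix.submatrix_apply, hσl, id_eq, hM, Matrix.of_apply,
          Matrix.fromBlocks_apply₁₂, Matrix.zero_apply]
        split <;> simp
    | inr j =>
      by_cases hj : j = i
      · subst hj
        have hσr : σ (Sum.inr j) = Sum.inl () := Equiv.swap_apply_right _ _
        cases s with
        | inl v => simp [Matrix.submatrix, hσr, hM]
        | inr k =>
          simp [Matrix.submatrix, hσr, hM, hD, Matrix.updateRow_apply]
      · have hσr : σ (Sum.inr j) = Sum.inr j := by
          apply Equiv.swap_apply_of_ne_of_ne <;> simp [hj]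
        cases s with
        | inl v =>
          simp only [Matrix.submatrix_apply, hσr, id_eq, hM, Matrix.of_apply,
            Matrix.fromBlocks_apply₂₁, Matrix.zero_apply]
          rw [hroot j hj, sub_self]
        | inr k =>
          simp only [Matrix.submatrix_apply, hσr, id_eq, hM, Matrix.of_apply,
            Matrix.fromBlocks_apply₂₂, hD, Matrix.updateRow_apply, if_neg hj,
            Matrix.diagonal_apply]
          by_cases hkj : k = j
          · simp [hkj, hB]
          · simp [hkj, Ne.symm hkj]
  have hsign : (Equiv.Perm.sign σ : ℂ) = -1 := by
    rw [hσ, Equiv.Perm.sign_swap (by simp)]; simp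
  have hdetD : D.det = (∏ j ∈ Finset.univ.erase i, B j) * c i := by
    have h1 : D.det = ((Matrix.diagonal B).updateCol i c).det := by
      rw [← Matrix.det_transpose D, hD, ← Matrix.updateCol_transpose,
        Matrix.diagonal_transpose]
    rw [h1, ← Matrix.cramer_apply, Matrix.cramer_eq_adjugate_mulVec,
      Matrix.adjugate_diagonal, Matrix.mulVec_diagonal]
  have hMdet : M.det = -((x i ^ (m - 1) - β i) * D.det) := by
    have := Matrix.det_permute σ M
    rw [hblock, hsign] at this
    rw [Matrix.det_fromBlocks_zero₂₁, Matrix.det_unique] at this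
    simp only [Matrix.of_apply] at this
    rw [neg_one_mul] at this
    exact neg_eq_iff_eq_neg.mp this.symm
  have key : M.det = (-1 : ℂ) * (x i ^ (m - 1) - β i) * c i *
      ∏ j ∈ Finset.univ.erase i, B j := by
    rw [hMdet, hdetD]; ring
  refine ⟨?_, -1, Or.inr rfl, key⟩
  rw [key]
  have hm1 : ((m : ℂ) - 1) ≠ 0 := by
    have : ((m : ℂ) - 1) = ((m - 1 : ℕ) : ℂ) := by
      push_cast [Nat.cast_sub (by omega : 1 ≤ m)]; ring
    rw [this]
    exact_mod_cast Nat.sub_ne_zero_of_lt (by omega)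
  refine mul_ne_zero (mul_ne_zero (mul_ne_zero (by norm_num)
    (sub_ne_zero.mpr hAi)) hci) ?_
  refine Finset.prod_ne_zero_iff.mpr fun j hj => ?_
  have hji : j ≠ i := (Finset.mem_erase.mp hj).1
  exact mul_ne_zero (mul_ne_zero (sub_ne_zero.mpr (hμ j hji)) hm1)
    (pow_ne_zero _ (hxj j hji))
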